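/- Fix 0 < α < 1, j ≥ 1, and a time grid 0 = t_0 < ... < t_n. For the L1+ kernel b^{(1-α,n)}_j = (1/(τ_n τ_{n-j})) ∫_{t_{n-1}}^{t_n} ∫_{t_{n-j-1}}^{t_{n-j}} (t-s)^{-α}/Γ(1-α) ds dt (valid since t_{n-j} ≤ t_{n-1}), the limit as α → 1⁻ of b^{(1-α,n)}_j equals 0. -/

import Mathlib

open intervalIntegral Filter

private lemma inner_int (α x c d : ℝ) (hα : -1 < -α) (hdx : d ≤ x) :
    ∫ s in c..d, (x - s) ^ (-α) =
      ((x - c) ^ (1 - α) - (x - d) ^ (1 - α)) / (1 - α) := by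
  rw [intervalIntegral.integral_comp_sub_left (fun u => u ^ (-α)) x,
    integral_rpow (Or.inl hα)]
  rw [show -α + 1 = 1 - α by ring]

private lemma double_int {α a b c d : ℝ} (hα0 : 0 < α) (hα1 : α < 1)
    (hcd : c ≤ d) (hda : d ≤ a) (hab : a ≤ b) :
    (∫ x in a..b, ∫ s in c..d, (x - s) ^ (-α) / Real.Gamma (1 - α)) =
      ((b - c) ^ (2 - α) - (a - c) ^ (2 - α)
        - ((b - d) ^ (2 - α) - (a - d) ^ (2 - α))) / Real.Gamma (3 - α) := by
  have h1 : (1 : ℝ) - α ≠ 0 := by linarith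
  have h2 : (2 : ℝ) - α ≠ 0 := by linarith
  have hΓ : Real.Gamma (1 - α) ≠ 0 :=
    (Real.Gamma_pos_of_pos (by linarith)).ne'
  have hG2 : Real.Gamma (2 - α) = (1 - α) * Real.Gamma (1 - α) := by
    rw [show (2 : ℝ) - α = (1 - α) + 1 by ring, Real.Gamma_add_one h1]
  have hG3 : Real.Gamma (3 - α) = (2 - α) * ((1 - α) * Real.Gamma (1 - α)) := by
    rw [show (3 : ℝ) - α = (2 - α) + 1 by ring, Real.Gamma_add_one h2, hG2]
  have hinner : ∀ x ∈ Set.uIcc a b,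
      (∫ s in c..d, (x - s) ^ (-α) / Real.Gamma (1 - α)) =
        (((x - c) ^ (1 - α) - (x - d) ^ (1 - α)) / (1 - α)) / Real.Gamma (1 - α) := by
    intro x hx
    rw [Set.uIcc_of_le hab] at hx
    rw [intervalIntegral.integral_div, inner_int α x c d (by linarith) (hda.trans hx.1)]
  rw [intervalIntegral.integral_congr hinner]
  have hcont : ∀ e : ℝ, Continuous fun x : ℝ => (x - e) ^ (1 - α) := by
    intro e
    have : Continuous fun y : ℝ => y ^ (1 - α) := by
      rw [continuous_iff_continuousAt]
      intro y
      exact Real.continuousAt_rpow_const y (1 - α) (Or.inr (by linarith))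
    exact this.comp (continuous_sub_right e)
  have sub_int : (∫ x in a..b, (((x - c) ^ (1 - α) - (x - d) ^ (1 - α)) / (1 - α))
        / Real.Gamma (1 - α)) =
      ((∫ x in a..b, (x - c) ^ (1 - α)) - ∫ x in a..b, (x - d) ^ (1 - α))
        / (1 - α) / Real.Gamma (1 - α) := by
    rw [intervalIntegral.integral_div, intervalIntegral.integral_div,
      intervalIntegral.integral_sub ((hcont c).intervalIntegrable a b)
        ((hcont d).intervalIntegrable a b)]
  rw [sub_int]
  have key : ∀ e : ℝ, (∫ x in a..b, (x - e) ^ (1 - α)) =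
      ((b - e) ^ (2 - α) - (a - e) ^ (2 - α)) / (2 - α) := by
    intro e
    rw [intervalIntegral.integral_comp_sub_right (fun u => u ^ (1 - α)) e,
      integral_rpow (Or.inl (by linarith))]
    rw [show (1 : ℝ) - α + 1 = 2 - α by ring]
  rw [key c, key d, hG3, div_sub_div_same, div_div, div_div]
  -- done

theorem stmt_7 (n j : ℕ) (hj : 1 ≤ j) (hjn : j + 1 ≤ n) (t : ℕ → ℝ)
    (ht0 : t 0 = 0) (hmono : ∀ i, i < n → t i < t (i+1)) :
    Tendsto (fun α : ℝ =>
        (1 / ((t n - t (n-1)) * (t (n-j) - t (n-j-1)))) *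
          ∫ x in (t (n-1))..(t n), ∫ s in (t (n-j-1))..(t (n-j)),
            (x - s)^(-α) / Real.Gamma (1 - α))
      (nhdsWithin 1 (Set.Iio 1)) (nhds 0) := by
  have hle : ∀ i k, i ≤ k → k ≤ n → t i ≤ t k := by
    intro i k hik hkn
    induction k with
    | zero => rw [Nat.le_zero.mp hik]
    | succ m ih =>
      rcases Nat.lt_or_ge i (m + 1) with h | h
      · exact (ih (Nat.lt_succ_iff.mp h) (le_trans (Nat.le_succ m) hkn)).trans
          (le_of_lt (hmono m (Nat.lt_of_succ_le hkn)))
      · rw [le_antisymm hik h]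
  set a := t (n - 1) with ha
  set b := t n with hb
  set c := t (n - j - 1) with hc
  set d := t (n - j) with hd
  have hcd : c ≤ d := hle _ _ (Nat.sub_le _ _) (by omega)
  have hda : d ≤ a := hle _ _ (by omega) (by omega)
  have hab : a ≤ b := hle _ _ (Nat.sub_le _ _) le_rfl
  -- the limit function
  have hrpow : ∀ p : ℝ, Tendsto (fun α : ℝ => p ^ (2 - α)) (nhds 1) (nhds p) := by
    intro p
    have hc2 : ContinuousAt (fun q : ℝ × ℝ => q.1 ^ q.2) (p, (1 : ℝ)) :=
      Real.continuousAt_rpow (p, 1) (Or.inr one_pos)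
    have hp : Tendsto (fun α : ℝ => ((p, 2 - α) : ℝ × ℝ)) (nhds 1) (nhds (p, 1)) := by
      have h := Continuous.tendsto (by continuity : Continuous fun α : ℝ => ((p, 2 - α) : ℝ × ℝ)) 1
      norm_num at h
      exact h
    have := hc2.tendsto.comp hp
    simpa [Real.rpow_one, Function.comp_def] using this
  have hΓ : Tendsto (fun α : ℝ => Real.Gamma (3 - α)) (nhds 1) (nhds 1) := by
    have h2 : ContinuousAt Real.Gamma 2 := by
      refine (Real.differentiableAt_Gamma ?_).continuousAt
      intro m
      have : (0:ℝ) ≤ m := Nat.cast_nonneg m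
      norm_num
      linarith
    have h31 : Tendsto (fun α : ℝ => (3 : ℝ) - α) (nhds 1) (nhds 2) := by
      have h := Continuous.tendsto (by continuity : Continuous fun α : ℝ => (3 : ℝ) - α) 1
      norm_num at h
      exact h
    have := h2.tendsto.comp h31
    have h21 : Real.Gamma 2 = 1 := by
      rw [show (2:ℝ) = 1 + 1 by norm_num, Real.Gamma_add_one one_ne_zero, Real.Gamma_one]
      ring
    simpa [show (3:ℝ) - 1 = 2 by norm_num, h21, Function.comp_def] using this
  have hnum : Tendsto (fun α : ℝ => (b - c) ^ (2 - α) - (a - c) ^ (2 - α)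
      - ((b - d) ^ (2 - α) - (a - d) ^ (2 - α))) (nhds 1)
      (nhds ((b - c) - (a - c) - ((b - d) - (a - d)))) :=
    (((hrpow (b - c)).sub (hrpow (a - c))).sub ((hrpow (b - d)).sub (hrpow (a - d))))
  have hlim : Tendsto (fun α : ℝ =>
      (1 / ((b - a) * (d - c))) *
        (((b - c) ^ (2 - α) - (a - c) ^ (2 - α)
          - ((b - d) ^ (2 - α) - (a - d) ^ (2 - α))) / Real.Gamma (3 - α)))
      (nhds 1) (nhds 0) := by
    have := (tendsto_const_nhds (x := (1 / ((b - a) * (d - c)) : ℝ))).mul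
      (hnum.div hΓ one_ne_zero)
    simpa using this
  refine Tendsto.congr' ?_ (hlim.mono_left nhdsWithin_le_nhds)
  filter_upwards [Ioo_mem_nhdsLT_of_mem (Set.mem_Ioc.mpr ⟨zero_lt_one, le_rfl⟩)] with α hα
  rw [double_int hα.1 hα.2 hcd hda hab]
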